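/- The combined boundary map extends to a fibrewise open embedding of ⨆_{i=0}^{n} S¹ × [0,1) × fD°(n) into ℝfD°(n): there exists a continuous map e : {0,1,…,n} × S¹ × [0,1) × fD°(n) → ℂ with e(i,θ,s,a) ∈ |a| for all arguments, such that the map E(i,θ,s,a) = (a, e(i,θ,s,a)) into ℝfD°(n) is injective, is a homeomorphism onto an open subset of ℝfD°(n), and satisfies E(i,θ,0,a) = (a, ∂_i^a(θ)) for all i ∈ {0,1,…,n}, θ ∈ S¹ and a ∈ fD°(n). -/

import Mathlib

/-- Ambient space of parameters for `n` framed little discs: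
centres, radii, framings. -/
abbrev Amb (n : ℕ) : Type := (Fin n → ℂ) × (Fin n → ℝ) × (Fin n → ℂ)

/-- The framed little discs operad space `fD(n)`: `n` disjoint framed little discs inside
the unit disc (the `i`-th little disc is `w ↦ zᵢ + rᵢαᵢw`). -/
def fD (n : ℕ) : Set (Amb n) :=
  {a | (∀ i, 0 < a.2.1 i) ∧ (∀ i, ‖a.1 i‖ + a.2.1 i ≤ 1) ∧
       (∀ i, ‖a.2.2 i‖ = 1) ∧
       ∀ i j, i ≠ j → a.2.1 i + a.2.1 j < ‖a.1 i - a.1 j‖}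

/-- `fD°(n)`: the subspace of `fD(n)` where the little discs avoid the boundary circle. -/
def fDo (n : ℕ) : Set (Amb n) :=
  {a | a ∈ fD n ∧ ∀ i, ‖a.1 i‖ + a.2.1 i < 1}

/-- The realization `|a|`: the closed unit disc minus the interiors of the little discs. -/
def realiz {n : ℕ} (a : Amb n) : Set ℂ :=
  {w | ‖w‖ ≤ 1 ∧ ∀ i, a.2.1 i ≤ ‖w - a.1 i‖}

/-- The boundary maps of `|a|`: `∂₀ = ∂_out` is the boundary of the big disc, and for
`i ≥ 1`, `∂ᵢ` is the boundary of the `i`-th little disc. -/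
def bdry {n : ℕ} (a : Amb n) (i : Fin (n + 1)) (θ : ℂ) : ℂ :=
  if h : i = 0 then θ
  else a.1 (i.pred h) + (a.2.1 (i.pred h) : ℂ) * a.2.2 (i.pred h) * θ

/-- The total space `ℝfD°(n)` of realizations over `fD°(n)`. -/
def RfDo (n : ℕ) : Set (↥(fDo n) × ℂ) :=
  {p | p.2 ∈ realiz (p.1 : Amb n)}

namespace BEaux

variable {n : ℕ}

/-- margin -/
noncomputable def mrg (a : Amb n) : ℝ :=
  min (Finset.univ.fold min 1 (fun i : Fin n => 1 - ‖a.1 i‖ - a.2.1 i))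
    (Finset.univ.fold min 1 (fun ij : Fin n × Fin n =>
      if ij.1 = ij.2 then 1
      else ‖a.1 ij.1 - a.1 ij.2‖ - a.2.1 ij.1 - a.2.1 ij.2))

noncomputable def eps (a : Amb n) : ℝ := mrg a / 3

lemma mrg_pos {a : Amb n} (ha : a ∈ fDo n) : 0 < mrg a := by
  rw [mrg, lt_min_iff, Finset.lt_fold_min, Finset.lt_fold_min]
  refine ⟨⟨one_pos, fun i _ => by linarith [ha.2 i]⟩, ⟨one_pos, fun ij _ => ?_⟩⟩
  by_cases h : ij.1 = ij.2
  · simp [h]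
  · simp only [if_neg h]
    linarith [ha.1.2.2.2 ij.1 ij.2 h]

lemma mrg_le_one (a : Amb n) : mrg a ≤ 1 :=
  (min_le_left _ _).trans ((Finset.fold_min_le _).2 (Or.inl le_rfl))

lemma mrg_le_out (a : Amb n) (i : Fin n) :
    mrg a ≤ 1 - ‖a.1 i‖ - a.2.1 i :=
  (min_le_left _ _).trans
    ((Finset.fold_min_le _).2 (Or.inr ⟨i, Finset.mem_univ _, le_rfl⟩))

lemma mrg_le_gap (a : Amb n) {i j : Fin n} (h : i ≠ j) :
    mrg a ≤ ‖a.1 i - a.1 j‖ - a.2.1 i - a.2.1 j :=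
  (min_le_right _ _).trans
    ((Finset.fold_min_le _).2 (Or.inr ⟨(i, j), Finset.mem_univ _, by simp [h, le_rfl]⟩))

lemma eps_pos {a : Amb n} (ha : a ∈ fDo n) : 0 < eps a := by
  have := mrg_pos ha; rw [eps]; linarith

lemma eps_le_third (a : Amb n) : eps a ≤ 1 / 3 := by
  have := mrg_le_one a; rw [eps]; linarith

lemma three_eps_le_out {a : Amb n} (i : Fin n) :
    3 * eps a ≤ 1 - ‖a.1 i‖ - a.2.1 i := by
  have := mrg_le_out a i; rw [eps]; linarith

lemma three_eps_le_gap {a : Amb n} {i j : Fin n} (h : i ≠ j) :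
    3 * eps a ≤ ‖a.1 i - a.1 j‖ - a.2.1 i - a.2.1 j := by
  have := mrg_le_gap a h; rw [eps]; linarith

lemma continuous_fold_min {X ι : Type*} [TopologicalSpace X] (s : Finset ι)
    (f : ι → X → ℝ) (hf : ∀ i, Continuous (f i)) :
    Continuous fun x => s.fold min 1 fun i => f i x := by
  classical
  induction s using Finset.induction_on with
  | empty => simpa using continuous_const
  | insert _ _ h ih =>
      simp only [Finset.fold_insert h]
      exact (hf _).min ih

lemma continuous_eps : Continuous (eps : Amb n → ℝ) := by
  apply Continuous.div_const
  apply Continuous.min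
  · refine continuous_fold_min _ _ fun i => ?_
    exact (continuous_const.sub
      (continuous_norm.comp ((continuous_apply i).comp continuous_fst))).sub
      ((continuous_apply i).comp (continuous_fst.comp continuous_snd))
  · refine continuous_fold_min _ _ fun ij => ?_
    by_cases h : ij.1 = ij.2
    · simp only [if_pos h]; exact continuous_const
    · simp only [if_neg h]
      exact ((continuous_norm.comp
        (((continuous_apply ij.1).comp continuous_fst).sub
          ((continuous_apply ij.2).comp continuous_fst))).sub
        ((continuous_apply ij.1).comp (continuous_fst.comp continuous_snd))).sub
        ((continuous_apply ij.2).comp (continuous_fst.comp continuous_snd))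


/-- The extended boundary map value. -/
noncomputable def eV (i : Fin (n + 1)) (θ : ℂ) (s : ℝ) (a : Amb n) : ℂ :=
  Fin.cases (motive := fun _ => ℂ) (((1 - s * eps a : ℝ) : ℂ) * θ)
    (fun j => a.1 j + ((a.2.1 j + s * eps a : ℝ) : ℂ) * a.2.2 j * θ) i

lemma eV_zero (θ : ℂ) (s : ℝ) (a : Amb n) :
    eV 0 θ s a = ((1 - s * eps a : ℝ) : ℂ) * θ := rfl

lemma eV_succ (j : Fin n) (θ : ℂ) (s : ℝ) (a : Amb n) :
    eV j.succ θ s a = a.1 j + ((a.2.1 j + s * eps a : ℝ) : ℂ) * a.2.2 j * θ := by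
  rw [eV, Fin.cases_succ]

section facts
variable {a : Amb n} {θ : ℂ} {s : ℝ}

lemma se_nonneg (ha : a ∈ fDo n) (hs : s ∈ Set.Ico (0:ℝ) 1) : 0 ≤ s * eps a :=
  mul_nonneg hs.1 (eps_pos ha).le

lemma se_le_eps (ha : a ∈ fDo n) (hs : s ∈ Set.Ico (0:ℝ) 1) : s * eps a ≤ eps a := by
  nlinarith [eps_pos ha, hs.1, hs.2]

lemma abs_eV_zero (ha : a ∈ fDo n) (hθ : ‖θ‖ = 1) (hs : s ∈ Set.Ico (0:ℝ) 1) :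
    ‖eV 0 θ s a‖ = 1 - s * eps a := by
  have h1 : 0 ≤ 1 - s * eps a := by
    nlinarith [eps_le_third a, se_le_eps ha hs, se_nonneg ha hs]
  rw [eV_zero, norm_mul, hθ, Complex.norm_real, Real.norm_eq_abs, mul_one, abs_of_nonneg h1]

lemma abs_eV_succ (ha : a ∈ fDo n) (hθ : ‖θ‖ = 1) (hs : s ∈ Set.Ico (0:ℝ) 1)
    (j : Fin n) : ‖eV j.succ θ s a - a.1 j‖ = a.2.1 j + s * eps a := by
  have h2 : eV j.succ θ s a - a.1 j = ((a.2.1 j + s * eps a : ℝ) : ℂ) * a.2.2 j * θ := by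
    rw [eV_succ]; ring
  have h1 : 0 ≤ a.2.1 j + s * eps a := by
    have := ha.1.1 j; have := se_nonneg ha hs; linarith
  rw [h2, norm_mul, norm_mul, hθ, Complex.norm_real, Real.norm_eq_abs, ha.1.2.2.1 j, mul_one, mul_one,
    abs_of_nonneg h1]

lemma eV_mem_realiz (ha : a ∈ fDo n) (hθ : ‖θ‖ = 1)
    (hs : s ∈ Set.Ico (0:ℝ) 1) (i : Fin (n + 1)) : eV i θ s a ∈ realiz a := by
  induction i using Fin.cases with
  | zero =>
      refine ⟨by rw [abs_eV_zero ha hθ hs]; nlinarith [se_nonneg ha hs], fun j => ?_⟩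
      have h3 : ‖eV 0 θ s a‖ - ‖a.1 j‖
          ≤ ‖eV 0 θ s a - a.1 j‖ := by
        simpa only using norm_sub_norm_le (eV 0 θ s a) (a.1 j)
      rw [abs_eV_zero ha hθ hs] at h3
      have h4 := three_eps_le_out (a := a) j
      have h5 := se_le_eps ha hs
      have h6 := eps_pos ha
      linarith
  | succ j =>
      constructor
      · have h3 : ‖eV j.succ θ s a‖
            ≤ ‖a.1 j‖ + ‖eV j.succ θ s a - a.1 j‖ := by
          have := norm_add_le (a.1 j) (eV j.succ θ s a - a.1 j)
          simpa using this
        rw [abs_eV_succ ha hθ hs] at h3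
        have h4 := three_eps_le_out (a := a) j
        have h5 := se_le_eps ha hs
        have h6 := eps_pos ha
        linarith
      · intro k
        by_cases hk : k = j
        · subst hk
          rw [abs_eV_succ ha hθ hs]
          have := se_nonneg ha hs; linarith
        · have htri : ‖a.1 j - a.1 k‖
              ≤ ‖eV j.succ θ s a - a.1 j‖
                + ‖eV j.succ θ s a - a.1 k‖ := by
            have h := norm_sub_le_norm_sub_add_norm_sub (a.1 j) (eV j.succ θ s a) (a.1 k)
            have : ‖a.1 j - eV j.succ θ s a‖
                = ‖eV j.succ θ s a - a.1 j‖ := by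
              rw [← norm_neg]; ring_nf
            linarith [h, this.le]
          rw [abs_eV_succ ha hθ hs] at htri
          have h4 := three_eps_le_gap (a := a) (fun h => hk h.symm : j ≠ k)
          have h5 := se_le_eps ha hs
          have h6 := eps_pos ha
          linarith

end facts

/-- The open pieces of the image. -/
def Wset (i : Fin (n + 1)) : Set (↥(fDo n) × ℂ) :=
  Fin.cases (motive := fun _ => Set (↥(fDo n) × ℂ))
    {p | 1 - eps (p.1 : Amb n) < ‖p.2‖}
    (fun j => {p | ‖p.2 - (p.1 : Amb n).1 j‖
      < (p.1 : Amb n).2.1 j + eps (p.1 : Amb n)}) i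

lemma Wset_zero : (Wset 0 : Set (↥(fDo n) × ℂ))
    = {p | 1 - eps (p.1 : Amb n) < ‖p.2‖} := rfl

lemma Wset_succ (j : Fin n) : (Wset j.succ : Set (↥(fDo n) × ℂ))
    = {p | ‖p.2 - (p.1 : Amb n).1 j‖
      < (p.1 : Amb n).2.1 j + eps (p.1 : Amb n)} := by
  rw [Wset, Fin.cases_succ]

lemma continuous_epsP : Continuous fun p : ↥(fDo n) × ℂ => eps (p.1 : Amb n) :=
  continuous_eps.comp (continuous_subtype_val.comp continuous_fst)

lemma isOpen_Wset (i : Fin (n + 1)) : IsOpen (Wset i : Set (↥(fDo n) × ℂ)) := by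
  induction i using Fin.cases with
  | zero =>
      rw [Wset_zero]
      exact isOpen_lt (continuous_const.sub continuous_epsP)
        (continuous_norm.comp continuous_snd)
  | succ j =>
      rw [Wset_succ]
      refine isOpen_lt (continuous_norm.comp ?_) ?_
      · exact continuous_snd.sub ((continuous_apply j).comp
          (continuous_fst.comp (continuous_subtype_val.comp continuous_fst)))
      · exact ((continuous_apply j).comp ((continuous_fst.comp continuous_snd).comp
          (continuous_subtype_val.comp continuous_fst))).add continuous_epsP

/-- On `RfDo`, the pieces are pairwise disjoint. -/
lemma Wset_disjoint {p : ↥(fDo n) × ℂ} (hp : p ∈ RfDo n) {i j : Fin (n + 1)}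
    (hi : p ∈ Wset i) (hj : p ∈ Wset j) : i = j := by
  obtain ⟨⟨a, ha⟩, w⟩ := p
  have hre : w ∈ realiz a := hp
  have heps := eps_pos ha
  have key : ∀ k : Fin n, ¬((1 - eps a < ‖w‖) ∧
      ‖w - a.1 k‖ < a.2.1 k + eps a) := by
    rintro k ⟨h0, hk⟩
    have h3 : ‖w‖ - ‖w - a.1 k‖ ≤ ‖a.1 k‖ := by
      simpa only using norm_sub_norm_le w (w - a.1 k) |>.trans_eq
        (by ring_nf)
    have h4 := three_eps_le_out (a := a) k
    linarith
  induction i using Fin.cases with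
  | zero =>
      induction j using Fin.cases with
      | zero => rfl
      | succ k =>
          rw [Wset_zero] at hi; rw [Wset_succ] at hj
          exact absurd ⟨hi, hj⟩ (key k)
  | succ k =>
      induction j using Fin.cases with
      | zero =>
          rw [Wset_zero] at hj; rw [Wset_succ] at hi
          exact absurd ⟨hj, hi⟩ (key k)
      | succ l =>
          by_cases hkl : k = l
          · rw [hkl]
          · exfalso
            rw [Wset_succ] at hi hj
            simp only [Set.mem_setOf_eq] at hi hj
            have htri : ‖a.1 k - a.1 l‖
                ≤ ‖w - a.1 k‖ + ‖w - a.1 l‖ := by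
              have h := norm_sub_le_norm_sub_add_norm_sub (a.1 k) w (a.1 l)
              have h2 : ‖a.1 k - w‖ = ‖w - a.1 k‖ := by
                rw [← norm_neg]; ring_nf
              linarith
            have h4 := three_eps_le_gap (a := a) hkl
            linarith

/-- raw angular coordinate of the local inverse -/
noncomputable def thRaw (i : Fin (n + 1)) (p : ↥(fDo n) × ℂ) : ℂ :=
  Fin.cases (motive := fun _ => ℂ) (p.2 / (‖p.2‖ : ℝ))
    (fun j => (p.2 - (p.1 : Amb n).1 j)
      / ((p.1 : Amb n).2.2 j * (‖p.2 - (p.1 : Amb n).1 j‖ : ℝ))) i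

/-- raw radial coordinate of the local inverse -/
noncomputable def sRaw (i : Fin (n + 1)) (p : ↥(fDo n) × ℂ) : ℝ :=
  Fin.cases (motive := fun _ => ℝ) ((1 - ‖p.2‖) / eps (p.1 : Amb n))
    (fun j => (‖p.2 - (p.1 : Amb n).1 j‖ - (p.1 : Amb n).2.1 j)
      / eps (p.1 : Amb n)) i

lemma thRaw_zero (p : ↥(fDo n) × ℂ) :
    thRaw 0 p = p.2 / (‖p.2‖ : ℝ) := rfl

lemma thRaw_succ (j : Fin n) (p : ↥(fDo n) × ℂ) :
    thRaw j.succ p = (p.2 - (p.1 : Amb n).1 j)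
      / ((p.1 : Amb n).2.2 j * (‖p.2 - (p.1 : Amb n).1 j‖ : ℝ)) := by
  rw [thRaw, Fin.cases_succ]

lemma sRaw_zero (p : ↥(fDo n) × ℂ) :
    sRaw 0 p = (1 - ‖p.2‖) / eps (p.1 : Amb n) := rfl

lemma sRaw_succ (j : Fin n) (p : ↥(fDo n) × ℂ) :
    sRaw j.succ p = (‖p.2 - (p.1 : Amb n).1 j‖ - (p.1 : Amb n).2.1 j)
      / eps (p.1 : Amb n) := by
  rw [sRaw, Fin.cases_succ]


section vals
variable {a : Amb n} {θ : ℂ} {s : ℝ}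

lemma se_lt_eps (ha : a ∈ fDo n) (hs : s ∈ Set.Ico (0:ℝ) 1) : s * eps a < eps a := by
  nlinarith [eps_pos ha, hs.1, hs.2]

lemma eV_mem_Wset (ha : a ∈ fDo n) (hθ : ‖θ‖ = 1)
    (hs : s ∈ Set.Ico (0:ℝ) 1) (i : Fin (n + 1)) :
    ((⟨a, ha⟩, eV i θ s a) : ↥(fDo n) × ℂ) ∈ Wset i := by
  induction i using Fin.cases with
  | zero =>
      rw [Wset_zero]
      show 1 - eps a < ‖eV 0 θ s a‖
      rw [abs_eV_zero ha hθ hs]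
      linarith [se_lt_eps ha hs]
  | succ j =>
      rw [Wset_succ]
      show ‖eV j.succ θ s a - a.1 j‖ < a.2.1 j + eps a
      rw [abs_eV_succ ha hθ hs]
      linarith [se_lt_eps ha hs]

lemma one_sub_se_pos (ha : a ∈ fDo n) (hs : s ∈ Set.Ico (0:ℝ) 1) :
    0 < 1 - s * eps a := by
  nlinarith [eps_le_third a, se_le_eps ha hs, se_nonneg ha hs]

lemma thRaw_eV (ha : a ∈ fDo n) (hθ : ‖θ‖ = 1)
    (hs : s ∈ Set.Ico (0:ℝ) 1) (i : Fin (n + 1)) :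
    thRaw i ((⟨a, ha⟩, eV i θ s a) : ↥(fDo n) × ℂ) = θ := by
  induction i using Fin.cases with
  | zero =>
      rw [thRaw_zero]
      show eV 0 θ s a / ((‖eV 0 θ s a‖ : ℝ) : ℂ) = θ
      rw [abs_eV_zero ha hθ hs, eV_zero]
      have hne : ((1 - s * eps a : ℝ) : ℂ) ≠ 0 := by
        exact_mod_cast ne_of_gt (one_sub_se_pos ha hs)
      rw [mul_comm, mul_div_assoc, div_self hne, mul_one]
  | succ j =>
      rw [thRaw_succ]
      show (eV j.succ θ s a - a.1 j)
          / (a.2.2 j * ((‖eV j.succ θ s a - a.1 j‖ : ℝ) : ℂ)) = θ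
      rw [abs_eV_succ ha hθ hs]
      have h2 : eV j.succ θ s a - a.1 j
          = ((a.2.1 j + s * eps a : ℝ) : ℂ) * a.2.2 j * θ := by rw [eV_succ]; ring
      have hcne : ((a.2.1 j + s * eps a : ℝ) : ℂ) ≠ 0 := by
        have : (0:ℝ) < a.2.1 j + s * eps a := by
          have := ha.1.1 j; have := se_nonneg ha hs; linarith
        exact_mod_cast ne_of_gt this
      have hane : a.2.2 j ≠ 0 := by
        intro h; have := ha.1.2.2.1 j; rw [h] at this; simp at this
      rw [h2]
      have h3 : ((a.2.1 j + s * eps a : ℝ) : ℂ) * a.2.2 j * θ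
          = θ * (a.2.2 j * ((a.2.1 j + s * eps a : ℝ) : ℂ)) := by ring
      rw [h3, mul_div_assoc, div_self (mul_ne_zero hane hcne), mul_one]
  end vals

section inv
variable {a : Amb n} {θ : ℂ} {s : ℝ}

lemma sRaw_eV (ha : a ∈ fDo n) (hθ : ‖θ‖ = 1)
    (hs : s ∈ Set.Ico (0:ℝ) 1) (i : Fin (n + 1)) :
    sRaw i ((⟨a, ha⟩, eV i θ s a) : ↥(fDo n) × ℂ) = s := by
  have hene : eps a ≠ 0 := ne_of_gt (eps_pos ha)
  induction i using Fin.cases with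
  | zero =>
      rw [sRaw_zero]
      show (1 - ‖eV 0 θ s a‖) / eps a = s
      rw [abs_eV_zero ha hθ hs]
      field_simp; ring
  | succ j =>
      rw [sRaw_succ]
      show (‖eV j.succ θ s a - a.1 j‖ - a.2.1 j) / eps a = s
      rw [abs_eV_succ ha hθ hs]
      field_simp; ring

end inv

section pt
variable {p : ↥(fDo n) × ℂ}

lemma abs_pos_of_W0 (hw : p ∈ Wset 0) : 0 < ‖p.2‖ := by
  rw [Wset_zero] at hw
  have := eps_le_third (p.1 : Amb n)
  simp only [Set.mem_setOf_eq] at hw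
  linarith

lemma t_pos_of_Wsucc {j : Fin n} (hre : p ∈ RfDo n) :
    0 < ‖p.2 - (p.1 : Amb n).1 j‖ := by
  have h1 := hre.2 j
  have h2 := p.1.2.1.1 j
  linarith

lemma abs_thRaw {i : Fin (n + 1)} (hre : p ∈ RfDo n) (hw : p ∈ Wset i) :
    ‖thRaw i p‖ = 1 := by
  induction i using Fin.cases with
  | zero =>
      have h := abs_pos_of_W0 hw
      rw [thRaw_zero, norm_div, Complex.norm_real, Real.norm_eq_abs, abs_of_pos h, div_self (ne_of_gt h)]
  | succ j =>
      have h := t_pos_of_Wsucc (j := j) hre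
      rw [thRaw_succ, norm_div, norm_mul, Complex.norm_real, Real.norm_eq_abs, abs_of_pos h,
        p.1.2.1.2.2.1 j, one_mul, div_self (ne_of_gt h)]

lemma sRaw_mem {i : Fin (n + 1)} (hre : p ∈ RfDo n) (hw : p ∈ Wset i) :
    sRaw i p ∈ Set.Ico (0:ℝ) 1 := by
  have hep := eps_pos p.1.2
  induction i using Fin.cases with
  | zero =>
      rw [Wset_zero] at hw
      simp only [Set.mem_setOf_eq] at hw
      have h1 : ‖p.2‖ ≤ 1 := hre.1
      rw [sRaw_zero]
      exact ⟨div_nonneg (by linarith) hep.le, (div_lt_one hep).2 (by linarith)⟩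
  | succ j =>
      rw [Wset_succ] at hw
      simp only [Set.mem_setOf_eq] at hw
      have h1 := hre.2 j
      rw [sRaw_succ]
      exact ⟨div_nonneg (by linarith) hep.le, (div_lt_one hep).2 (by linarith)⟩

lemma eV_thRaw_sRaw {i : Fin (n + 1)} (hre : p ∈ RfDo n) (hw : p ∈ Wset i) :
    eV i (thRaw i p) (sRaw i p) (p.1 : Amb n) = p.2 := by
  have hep := eps_pos p.1.2
  induction i using Fin.cases with
  | zero =>
      have h := abs_pos_of_W0 hw
      have hr : 1 - sRaw 0 p * eps (p.1 : Amb n) = ‖p.2‖ := by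
        rw [sRaw_zero]; field_simp; ring
      rw [eV_zero, thRaw_zero, hr]
      have hne : ((‖p.2‖ : ℝ) : ℂ) ≠ 0 := by exact_mod_cast ne_of_gt h
      rw [mul_div_assoc']
      rw [mul_comm, mul_div_assoc, div_self hne, mul_one]
  | succ j =>
      have h := t_pos_of_Wsucc (j := j) hre
      have hr : (p.1 : Amb n).2.1 j + sRaw j.succ p * eps (p.1 : Amb n)
          = ‖p.2 - (p.1 : Amb n).1 j‖ := by
        rw [sRaw_succ]; field_simp; ring
      have hane : (p.1 : Amb n).2.2 j ≠ 0 := by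
        intro hh; have := p.1.2.1.2.2.1 j; rw [hh] at this; simp at this
      have htne : ((‖p.2 - (p.1 : Amb n).1 j‖ : ℝ) : ℂ) ≠ 0 := by
        exact_mod_cast ne_of_gt h
      rw [eV_succ, thRaw_succ, hr]
      have key : ((‖p.2 - (p.1 : Amb n).1 j‖ : ℝ) : ℂ) * (p.1 : Amb n).2.2 j
            * ((p.2 - (p.1 : Amb n).1 j)
              / ((p.1 : Amb n).2.2 j * (‖p.2 - (p.1 : Amb n).1 j‖ : ℝ)))
          = p.2 - (p.1 : Amb n).1 j := by
        rw [mul_comm (((‖p.2 - (p.1 : Amb n).1 j‖ : ℝ) : ℂ)), mul_div_assoc',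
          mul_comm, mul_div_assoc, div_self (mul_ne_zero hane htne), mul_one]
      rw [key]; ring

lemma continuousAt_thRaw {i : Fin (n + 1)} (hre : p ∈ RfDo n) (hw : p ∈ Wset i) :
    ContinuousAt (thRaw i) p := by
  induction i using Fin.cases with
  | zero =>
      have h := abs_pos_of_W0 hw
      have : thRaw (0 : Fin (n + 1)) = fun q : ↥(fDo n) × ℂ =>
          q.2 / ((‖q.2‖ : ℝ) : ℂ) := funext thRaw_zero
      rw [this]
      exact ContinuousAt.div continuous_snd.continuousAt
        (Complex.continuous_ofReal.comp (continuous_norm.comp continuous_snd)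
          |>.continuousAt) (by exact_mod_cast ne_of_gt h)
  | succ j =>
      have h := t_pos_of_Wsucc (j := j) hre
      have heq : thRaw (j.succ : Fin (n + 1)) = fun q : ↥(fDo n) × ℂ =>
          (q.2 - (q.1 : Amb n).1 j)
            / ((q.1 : Amb n).2.2 j * ((‖q.2 - (q.1 : Amb n).1 j‖ : ℝ) : ℂ)) :=
        funext (thRaw_succ j)
      have hane : (p.1 : Amb n).2.2 j ≠ 0 := by
        intro hh; have := p.1.2.1.2.2.1 j; rw [hh] at this; simp at this
      have hz : Continuous fun q : ↥(fDo n) × ℂ => (q.1 : Amb n).1 j :=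
        (continuous_apply j).comp (continuous_fst.comp (continuous_subtype_val.comp
          continuous_fst))
      have hal : Continuous fun q : ↥(fDo n) × ℂ => (q.1 : Amb n).2.2 j :=
        (continuous_apply j).comp ((continuous_snd.comp continuous_snd).comp
          (continuous_subtype_val.comp continuous_fst))
      rw [heq]
      refine ContinuousAt.div (continuous_snd.sub hz).continuousAt
        (hal.mul (Complex.continuous_ofReal.comp
          (continuous_norm.comp (continuous_snd.sub hz)))).continuousAt ?_
      exact mul_ne_zero hane (by exact_mod_cast ne_of_gt h)

lemma continuousAt_sRaw {i : Fin (n + 1)} (hre : p ∈ RfDo n) (hw : p ∈ Wset i) :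
    ContinuousAt (sRaw i) p := by
  have hep : eps (p.1 : Amb n) ≠ 0 := ne_of_gt (eps_pos p.1.2)
  have hceps : Continuous fun q : ↥(fDo n) × ℂ => eps (q.1 : Amb n) := continuous_epsP
  induction i using Fin.cases with
  | zero =>
      have : sRaw (0 : Fin (n + 1)) = fun q : ↥(fDo n) × ℂ =>
          (1 - ‖q.2‖) / eps (q.1 : Amb n) := funext sRaw_zero
      rw [this]
      exact ContinuousAt.div (continuous_const.sub
        (continuous_norm.comp continuous_snd)).continuousAt hceps.continuousAt hep
  | succ j =>
      have hz : Continuous fun q : ↥(fDo n) × ℂ => (q.1 : Amb n).1 j :=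
        (continuous_apply j).comp (continuous_fst.comp (continuous_subtype_val.comp
          continuous_fst))
      have hrc : Continuous fun q : ↥(fDo n) × ℂ => (q.1 : Amb n).2.1 j :=
        (continuous_apply j).comp ((continuous_fst.comp continuous_snd).comp
          (continuous_subtype_val.comp continuous_fst))
      have : sRaw (j.succ : Fin (n + 1)) = fun q : ↥(fDo n) × ℂ =>
          (‖q.2 - (q.1 : Amb n).1 j‖ - (q.1 : Amb n).2.1 j)
            / eps (q.1 : Amb n) := funext (sRaw_succ j)
      rw [this]
      exact ContinuousAt.div ((continuous_norm.comp
        (continuous_snd.sub hz)).sub hrc).continuousAt hceps.continuousAt hep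

end pt

lemma continuous_fin_prod {Y Z : Type*} [TopologicalSpace Y] [TopologicalSpace Z]
    {m : ℕ} (F : Fin m → Y → Z) (hF : ∀ i, Continuous (F i)) :
    Continuous fun p : Fin m × Y => F p.1 p.2 := by
  rw [continuous_iff_continuousAt]
  rintro ⟨i, y⟩
  have hmem : ({i} ×ˢ (Set.univ : Set Y)) ∈ nhds ((i, y) : Fin m × Y) :=
    prod_mem_nhds ((isOpen_discrete {i}).mem_nhds rfl) Filter.univ_mem
  refine ContinuousAt.congr ((hF i).comp continuous_snd).continuousAt ?_
  filter_upwards [hmem] with p hp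
  have h1 : p.1 = i := hp.1
  rw [h1]
  rfl

lemma abs_of_sphere (θ : ↥(Metric.sphere (0:ℂ) 1)) : ‖(θ : ℂ)‖ = 1 := by
  have := θ.2
  simpa [Complex.dist_eq] using this

abbrev Dom (n : ℕ) : Type :=
  Fin (n + 1) × ↥(Metric.sphere (0 : ℂ) 1) × ↥(Set.Ico (0 : ℝ) 1) × ↥(fDo n)

noncomputable def E0 (x : Dom n) : ↥(fDo n) × ℂ :=
  (x.2.2.2, eV x.1 (x.2.1 : ℂ) (x.2.2.1 : ℝ) (x.2.2.2 : Amb n))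

lemma E0_mem_RfDo (x : Dom n) : E0 x ∈ RfDo n :=
  eV_mem_realiz x.2.2.2.2 (abs_of_sphere x.2.1) x.2.2.1.2 x.1

lemma E0_mem_Wset (x : Dom n) : E0 x ∈ Wset x.1 :=
  eV_mem_Wset x.2.2.2.2 (abs_of_sphere x.2.1) x.2.2.1.2 x.1

def Uset (n : ℕ) : Set ↥(RfDo n) := {q | ∃ i, (q : ↥(fDo n) × ℂ) ∈ Wset i}

lemma isOpen_Uset : IsOpen (Uset n) := by
  have h : Uset n = Subtype.val ⁻¹' (⋃ i, Wset i) := by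
    ext q; simp [Uset]
  rw [h]
  exact (isOpen_iUnion isOpen_Wset).preimage continuous_subtype_val

noncomputable def E' (x : Dom n) : ↥(Uset n) :=
  ⟨⟨E0 x, E0_mem_RfDo x⟩, x.1, E0_mem_Wset x⟩

noncomputable def idx (q : ↥(Uset n)) : Fin (n + 1) := q.2.choose

lemma idx_spec (q : ↥(Uset n)) : ((q : ↥(RfDo n)) : ↥(fDo n) × ℂ) ∈ Wset (idx q) :=
  q.2.choose_spec

lemma idx_eq (q : ↥(Uset n)) {i : Fin (n + 1)}
    (h : ((q : ↥(RfDo n)) : ↥(fDo n) × ℂ) ∈ Wset i) : idx q = i :=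
  Wset_disjoint q.1.2 (idx_spec q) h

lemma thRaw_mem_sphere (q : ↥(Uset n)) :
    thRaw (idx q) ((q : ↥(RfDo n)) : ↥(fDo n) × ℂ) ∈ Metric.sphere (0:ℂ) 1 := by
  simp [Complex.dist_eq, abs_thRaw q.1.2 (idx_spec q)]

lemma sRaw_mem_Ico (q : ↥(Uset n)) :
    sRaw (idx q) ((q : ↥(RfDo n)) : ↥(fDo n) × ℂ) ∈ Set.Ico (0:ℝ) 1 :=
  sRaw_mem q.1.2 (idx_spec q)

noncomputable def G (q : ↥(Uset n)) : Dom n :=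
  (idx q, ⟨thRaw (idx q) ((q : ↥(RfDo n)) : ↥(fDo n) × ℂ), thRaw_mem_sphere q⟩,
    ⟨sRaw (idx q) ((q : ↥(RfDo n)) : ↥(fDo n) × ℂ), sRaw_mem_Ico q⟩,
    (((q : ↥(RfDo n)) : ↥(fDo n) × ℂ)).1)

lemma left_inv_GE : Function.LeftInverse (G (n := n)) E' := by
  rintro ⟨i, θ, s, b⟩
  have hW : ((E' (i, θ, s, b) : ↥(RfDo n)) : ↥(fDo n) × ℂ) ∈ Wset i := E0_mem_Wset (i, θ, s, b)
  have hidx : idx (E' (i, θ, s, b)) = i := idx_eq _ hW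
  have h1 : thRaw (idx (E' (i, θ, s, b)))
      ((E' (i, θ, s, b) : ↥(RfDo n)) : ↥(fDo n) × ℂ) = (θ : ℂ) := by
    rw [hidx]
    exact thRaw_eV b.2 (abs_of_sphere θ) s.2 i
  have h2 : sRaw (idx (E' (i, θ, s, b)))
      ((E' (i, θ, s, b) : ↥(RfDo n)) : ↥(fDo n) × ℂ) = (s : ℝ) := by
    rw [hidx]
    exact sRaw_eV b.2 (abs_of_sphere θ) s.2 i
  simp only [G, Prod.mk.injEq]
  exact ⟨hidx, Subtype.ext h1, Subtype.ext h2, rfl⟩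

lemma right_inv_GE : Function.RightInverse (G (n := n)) E' := by
  rintro q
  apply Subtype.ext
  apply Subtype.ext
  show E0 (G q) = ((q : ↥(RfDo n)) : ↥(fDo n) × ℂ)
  exact Prod.ext rfl (eV_thRaw_sRaw q.1.2 (idx_spec q))

lemma continuous_eV_comp :
    Continuous fun x : Dom n => eV x.1 (x.2.1 : ℂ) (x.2.2.1 : ℝ) (x.2.2.2 : Amb n) := by
  refine continuous_fin_prod
    (fun (i : Fin (n + 1))
      (y : ↥(Metric.sphere (0:ℂ) 1) × ↥(Set.Ico (0:ℝ) 1) × ↥(fDo n)) =>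
      eV i (y.1 : ℂ) (y.2.1 : ℝ) (y.2.2 : Amb n)) fun i => ?_
  have ca : Continuous fun y : ↥(Metric.sphere (0:ℂ) 1) × ↥(Set.Ico (0:ℝ) 1) × ↥(fDo n)
      => (y.2.2 : Amb n) := continuous_subtype_val.comp (continuous_snd.comp continuous_snd)
  have cs : Continuous fun y : ↥(Metric.sphere (0:ℂ) 1) × ↥(Set.Ico (0:ℝ) 1) × ↥(fDo n)
      => (y.2.1 : ℝ) := continuous_subtype_val.comp (continuous_fst.comp continuous_snd)
  have cth : Continuous fun y : ↥(Metric.sphere (0:ℂ) 1) × ↥(Set.Ico (0:ℝ) 1) × ↥(fDo n)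
      => (y.1 : ℂ) := continuous_subtype_val.comp continuous_fst
  have ce : Continuous fun y : ↥(Metric.sphere (0:ℂ) 1) × ↥(Set.Ico (0:ℝ) 1) × ↥(fDo n)
      => eps (y.2.2 : Amb n) := continuous_eps.comp ca
  induction i using Fin.cases with
  | zero =>
      show Continuous fun y : ↥(Metric.sphere (0:ℂ) 1) × ↥(Set.Ico (0:ℝ) 1) × ↥(fDo n)
        => eV 0 (y.1 : ℂ) (y.2.1 : ℝ) (y.2.2 : Amb n)
      have heq : (fun y : ↥(Metric.sphere (0:ℂ) 1) × ↥(Set.Ico (0:ℝ) 1) × ↥(fDo n) =>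
          eV 0 (y.1 : ℂ) (y.2.1 : ℝ) (y.2.2 : Amb n))
          = fun y : ↥(Metric.sphere (0:ℂ) 1) × ↥(Set.Ico (0:ℝ) 1) × ↥(fDo n)
            => ((1 - (y.2.1 : ℝ) * eps (y.2.2 : Amb n) : ℝ) : ℂ) * (y.1 : ℂ) :=
        funext fun y => eV_zero _ _ _
      rw [heq]
      exact (Complex.continuous_ofReal.comp (continuous_const.sub (cs.mul ce))).mul cth
  | succ j =>
      show Continuous fun y : ↥(Metric.sphere (0:ℂ) 1) × ↥(Set.Ico (0:ℝ) 1) × ↥(fDo n)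
        => eV j.succ (y.1 : ℂ) (y.2.1 : ℝ) (y.2.2 : Amb n)
      have heq : (fun y : ↥(Metric.sphere (0:ℂ) 1) × ↥(Set.Ico (0:ℝ) 1) × ↥(fDo n) =>
          eV j.succ (y.1 : ℂ) (y.2.1 : ℝ) (y.2.2 : Amb n))
          = fun y : ↥(Metric.sphere (0:ℂ) 1) × ↥(Set.Ico (0:ℝ) 1) × ↥(fDo n)
            => (y.2.2 : Amb n).1 j
            + (((y.2.2 : Amb n).2.1 j + (y.2.1 : ℝ) * eps (y.2.2 : Amb n) : ℝ) : ℂ)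
              * (y.2.2 : Amb n).2.2 j * (y.1 : ℂ) :=
        funext fun y => eV_succ _ _ _ _
      rw [heq]
      have cz := (continuous_apply j).comp (continuous_fst.comp ca)
      have cr := (continuous_apply j).comp ((continuous_fst.comp continuous_snd).comp ca)
      have cal := (continuous_apply j).comp ((continuous_snd.comp continuous_snd).comp ca)
      exact cz.add (((Complex.continuous_ofReal.comp (cr.add (cs.mul ce))).mul cal).mul cth)

lemma continuous_E' : Continuous (E' (n := n)) := by
  apply Continuous.subtype_mk
  apply Continuous.subtype_mk
  exact (continuous_snd.comp (continuous_snd.comp continuous_snd)).prodMk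
    continuous_eV_comp

lemma nhds_Wset (q₀ : ↥(Uset n)) :
    (fun q : ↥(Uset n) => ((q : ↥(RfDo n)) : ↥(fDo n) × ℂ)) ⁻¹' Wset (idx q₀)
      ∈ nhds q₀ :=
  ((isOpen_Wset (idx q₀)).preimage
    (continuous_subtype_val.comp continuous_subtype_val)).mem_nhds (idx_spec q₀)

lemma continuous_idx : Continuous (idx (n := n)) := by
  rw [continuous_iff_continuousAt]
  intro q₀
  refine (continuousAt_const : ContinuousAt (fun _ => idx q₀) q₀).congr ?_
  filter_upwards [nhds_Wset q₀] with q hq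
  exact (idx_eq q hq).symm

lemma continuous_G : Continuous (G (n := n)) := by
  have cval : Continuous fun q : ↥(Uset n) => ((q : ↥(RfDo n)) : ↥(fDo n) × ℂ) :=
    continuous_subtype_val.comp continuous_subtype_val
  have cth : Continuous fun q : ↥(Uset n) =>
      thRaw (idx q) ((q : ↥(RfDo n)) : ↥(fDo n) × ℂ) := by
    rw [continuous_iff_continuousAt]
    intro q₀
    have hcv : ContinuousAt (fun q : ↥(Uset n) => ((q : ↥(RfDo n)) : ↥(fDo n) × ℂ))
        q₀ := cval.continuousAt
    have h1 : ContinuousAt (thRaw (idx q₀))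
        (((q₀ : ↥(RfDo n)) : ↥(fDo n) × ℂ)) := continuousAt_thRaw q₀.1.2 (idx_spec q₀)
    refine ContinuousAt.congr
      (ContinuousAt.comp (f := fun q : ↥(Uset n) => ((q : ↥(RfDo n)) : ↥(fDo n) × ℂ))
        (x := q₀) h1 hcv) ?_
    filter_upwards [nhds_Wset q₀] with q hq
    rw [idx_eq q hq]
    rfl
  have csr : Continuous fun q : ↥(Uset n) =>
      sRaw (idx q) ((q : ↥(RfDo n)) : ↥(fDo n) × ℂ) := by
    rw [continuous_iff_continuousAt]
    intro q₀
    have hcv : ContinuousAt (fun q : ↥(Uset n) => ((q : ↥(RfDo n)) : ↥(fDo n) × ℂ))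
        q₀ := cval.continuousAt
    have h1 : ContinuousAt (sRaw (idx q₀))
        (((q₀ : ↥(RfDo n)) : ↥(fDo n) × ℂ)) := continuousAt_sRaw q₀.1.2 (idx_spec q₀)
    refine ContinuousAt.congr
      (ContinuousAt.comp (f := fun q : ↥(Uset n) => ((q : ↥(RfDo n)) : ↥(fDo n) × ℂ))
        (x := q₀) h1 hcv) ?_
    filter_upwards [nhds_Wset q₀] with q hq
    rw [idx_eq q hq]
    rfl
  exact continuous_idx.prodMk ((cth.subtype_mk _).prodMk
    ((csr.subtype_mk _).prodMk (continuous_fst.comp cval)))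

noncomputable def homeoE : Dom n ≃ₜ ↥(Uset n) :=
  { toFun := E'
    invFun := G
    left_inv := left_inv_GE
    right_inv := right_inv_GE
    continuous_toFun := continuous_E'
    continuous_invFun := continuous_G }

lemma eV_bdry (i : Fin (n + 1)) (θ : ℂ) (a : Amb n) : eV i θ 0 a = bdry a i θ := by
  induction i using Fin.cases with
  | zero => rw [eV_zero, bdry, dif_pos rfl]; simp
  | succ j =>
      rw [eV_succ, bdry, dif_neg (Fin.succ_ne_zero j)]
      simp [Fin.pred_succ]


end BEaux

/-- The combined boundary map extends to a fibrewise open embedding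
`⨆_{i=0}^{n} S¹ × [0,1) × fD°(n) ↪ ℝfD°(n)`. -/
theorem boundary_extends_to_open_embedding (n : ℕ) :
    ∃ E : Fin (n + 1) × ↥(Metric.sphere (0 : ℂ) 1) × ↥(Set.Ico (0 : ℝ) 1) × ↥(fDo n) →
        ↥(RfDo n),
      Topology.IsOpenEmbedding E ∧
      (∀ i θ s a, ((E (i, θ, s, a) : ↥(fDo n) × ℂ)).1 = a) ∧
      (∀ i θ a, ((E (i, θ, ⟨0, le_refl 0, one_pos⟩, a) : ↥(fDo n) × ℂ)).2 =
        bdry (a : Amb n) i (θ : ℂ)) := by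
  refine ⟨fun x => ((BEaux.homeoE x : ↥(BEaux.Uset n)) : ↥(RfDo n)), ?_, ?_, ?_⟩
  · exact BEaux.isOpen_Uset.isOpenEmbedding_subtypeVal.comp
      BEaux.homeoE.isOpenEmbedding
  · intro i θ s a; rfl
  · intro i θ a
    exact BEaux.eV_bdry i (θ : ℂ) (a : Amb n)
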